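/- Let p be a prime, R a commutative ring, and A a commutative R-algebra of characteristic p. Let δ be an R-derivation of A, and let D be an R-linear endomorphism of A such that: (i) D(1) = 0; (ii) every (p+1)-fold iterated commutator of D with multiplication operators vanishes (D has order ≤ p); and (iii) D(a^p) = (δ a)^p for all a ∈ A. Then for all a, b ∈ A, D(a^p * b) = a^p * D(b) + (δ a)^p * b; that is, the commutator [D, t_{a^p}] equals multiplication by (δ a)^p. -/

import Mathlib

/-- `D` is a differential operator of order `≤ m` in Grothendieck's sense: every
`(m+1)`-fold iterated commutator of `D` with multiplication operators vanishes. -/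
def IsDiffOpLE (R : Type*) {A : Type*} [CommRing R] [CommRing A] [Algebra R A]
    (m : ℕ) (D : A →ₗ[R] A) : Prop :=
  ∀ a : Fin (m + 1) → A,
    Fin.foldl (m + 1)
      (fun E i => E ∘ₗ LinearMap.mulLeft R (a i) - LinearMap.mulLeft R (a i) ∘ₗ E) D = 0

private lemma foldl_const {α : Type*} (f : α → α) :
    ∀ (n : ℕ) (x : α), Fin.foldl n (fun s (_ : Fin n) => f s) x = f^[n] x := by
  intro n
  induction n with
  | zero => intro x; simp
  | succ n ih =>
      intro x
      rw [Fin.foldl_succ, ih, Function.iterate_succ_apply]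

/-- In characteristic `p`, if `D` has order `≤ p`, kills `1`, and satisfies
`D (a^p) = (δ a)^p` for a derivation `δ`, then `[D, t_(a^p)]` is multiplication by
`(δ a)^p`:  `D (a^p * b) = a^p * D b + (δ a)^p * b`. -/
theorem diffOp_order_p_pth_power_leibniz (p : ℕ) (hp : p.Prime) (R A : Type*) [CommRing R]
    [CommRing A] [Algebra R A] [CharP A p] (δ : Derivation R A A) (D : A →ₗ[R] A)
    (hD1 : D 1 = 0) (hord : IsDiffOpLE R p D) (hfrob : ∀ a : A, D (a ^ p) = (δ a) ^ p)
    (a b : A) :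
    D (a ^ p * b) = a ^ p * D b + (δ a) ^ p * b := by
  classical
  set L : Module.End R A := LinearMap.mulLeft R a with hLdef
  set x : Module.End R (Module.End R A) := LinearMap.mulRight R L with hxdef
  set y : Module.End R (Module.End R A) := LinearMap.mulLeft R L with hydef
  -- the ring of endomorphisms of `Module.End R A` also has `p = 0`
  have hp0 : ((p : ℕ) : Module.End R (Module.End R A)) = 0 := by
    ext E c
    have : ((p : ℕ) : Module.End R (Module.End R A)) E = (p : ℕ) • E := by
      simp [Module.End.natCast_apply]
    rw [this]
    have : ((p : ℕ) • E) c = (p : ℕ) • (E c) := by simp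
    rw [this, nsmul_eq_mul, CharP.cast_eq_zero A p, zero_mul]
    rfl
  -- Frobenius for the commutator: `(x - y)^p = x^p - y^p`
  have hcomm : Commute y x := LinearMap.commute_mulLeft_right L L
  have hxy : Commute (x - y) y := Commute.sub_left (R := Module.End R (Module.End R A)) (hcomm.symm) (Commute.refl y)
  obtain ⟨r, hr⟩ := hxy.exists_add_pow_prime_eq hp
  rw [show x - y + y = x from sub_add_cancel x y] at hr
  have hpow : (x - y) ^ p = x ^ p - y ^ p := by
    have h0 : ((p : ℕ) : Module.End R (Module.End R A)) * (x - y) * y * r = 0 := by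
      rw [hp0, zero_mul, zero_mul, zero_mul]
    rw [hr, h0, add_zero]; exact (add_sub_cancel_right ((x - y) ^ p) (y ^ p)).symm
  -- the commutator `C = [D, t_{a^p}]`
  set C : Module.End R A := ((x - y) ^ p) D with hCdef
  have hC' : C = D * LinearMap.mulLeft R (a ^ p) - LinearMap.mulLeft R (a ^ p) * D := by
    rw [hCdef, hpow, LinearMap.sub_apply, hxdef, hydef,
      LinearMap.pow_mulRight R (Module.End R A) L p,
      LinearMap.pow_mulLeft R (Module.End R A) L p,
      LinearMap.mulRight_apply, LinearMap.mulLeft_apply,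
      hLdef, LinearMap.pow_mulLeft R A a p]
  -- apply the order hypothesis to `(a, a, ..., a, b)`
  have hord' : C ∘ₗ LinearMap.mulLeft R b - LinearMap.mulLeft R b ∘ₗ C = 0 := by
    have h := hord (Fin.snoc (fun _ : Fin p => a) b)
    rw [Fin.foldl_succ_last] at h
    have hinner : (Fin.foldl p
        (fun E i => E ∘ₗ LinearMap.mulLeft R ((Fin.snoc (fun _ : Fin p => a) b : Fin (p+1) → A)
            i.castSucc)
          - LinearMap.mulLeft R ((Fin.snoc (fun _ : Fin p => a) b : Fin (p+1) → A) i.castSucc)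
            ∘ₗ E) D) = C := by
      have : (fun (E : Module.End R A) (i : Fin p) =>
          E ∘ₗ LinearMap.mulLeft R ((Fin.snoc (fun _ : Fin p => a) b : Fin (p+1) → A) i.castSucc)
          - LinearMap.mulLeft R ((Fin.snoc (fun _ : Fin p => a) b : Fin (p+1) → A) i.castSucc)
            ∘ₗ E)
          = fun (E : Module.End R A) (_ : Fin p) => (x - y) E := by
        funext E i
        simp [Fin.snoc_castSucc, hxdef, hydef, hLdef, Module.End.mul_eq_comp]
      rw [this, foldl_const, hCdef, ← Module.End.pow_apply]
    rw [hinner, Fin.snoc_last] at h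
    exact h
  -- evaluate the vanishing commutator at `1`
  have key : C b = b * C 1 := by
    have := LinearMap.ext_iff.mp hord' 1
    simp only [LinearMap.sub_apply, LinearMap.coe_comp, Function.comp_apply,
      LinearMap.mulLeft_apply, mul_one, LinearMap.zero_apply, sub_eq_zero] at this
    exact this
  have hC1 : C 1 = (δ a) ^ p := by
    rw [hC']
    simp only [LinearMap.sub_apply, Module.End.mul_apply, LinearMap.mulLeft_apply,
      mul_one, hD1, mul_zero, sub_zero, hfrob]
  have hCb : C b = D (a ^ p * b) - a ^ p * D b := by
    rw [hC']
    simp only [LinearMap.sub_apply, Module.End.mul_apply, LinearMap.mulLeft_apply]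
  rw [hCb, hC1] at key
  linear_combination key
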